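/- Suppose the estimator ĉc = N − Σ_{k=1}^m (a_k/β^k)·Θ̂_k satisfies E[Θ̂_k] = ‖L‖_k^k for each k, where a_k are the coefficients of a polynomial f with f(x) = Σ_k a_k x^k satisfying f(0) = 0 and max_{x∈[α,1]} |1 − f(x)| ≤ γ^m with γ = (1−α)/(1+α). If all nonzero eigenvalues of L/β lie in [α,1] and G has cc(G) zero eigenvalues, then |cc(G) − E[ĉc]| ≤ (N − cc(G))·γ^m. -/

import Mathlib

open Finset

/-- Bias bound for the estimator `ĉc = N − Σ_k (a_k/β^k) Θ̂_k`: if `E[Θ̂_k] = ‖L‖_k^k`,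
the polynomial `f(x) = Σ_{k=1}^m a_k x^k` satisfies `|1 − f(x)| ≤ γ^m` on `[α,1]` with
`γ = (1−α)/(1+α)`, all nonzero eigenvalues of `L/β` lie in `[α,1]`, and `cc(G)` is the
number of zero eigenvalues, then `|cc(G) − E[ĉc]| ≤ (N − cc(G)) γ^m`. -/
theorem bias_bound (N m : ℕ) (α β γ : ℝ) (hα0 : 0 < α) (hα1 : α < 1) (hβ : 0 < β)
    (hγ : γ = (1 - α) / (1 + α))
    (σ : Fin N → ℝ) (hσ : ∀ i, σ i ≠ 0 → σ i ∈ Set.Icc α 1)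
    (a : ℕ → ℝ)
    (hf : ∀ x ∈ Set.Icc α (1 : ℝ),
      |1 - ∑ k ∈ Finset.Icc 1 m, a k * x ^ k| ≤ γ ^ m)
    (Θ : ℕ → ℝ) (hΘ : ∀ k, Θ k = ∑ i, (β * σ i) ^ k)
    (cc : ℕ) (hcc : cc = Fintype.card {i : Fin N // σ i = 0})
    (Ecc : ℝ) (hE : Ecc = N - ∑ k ∈ Finset.Icc 1 m, a k / β ^ k * Θ k) :
    |(cc : ℝ) - Ecc| ≤ ((N : ℝ) - cc) * γ ^ m := by
  set F : Fin N → ℝ := fun i => ∑ k ∈ Finset.Icc 1 m, a k * σ i ^ k with hF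
  have hβk : ∀ k : ℕ, (β : ℝ) ^ k ≠ 0 := fun k => pow_ne_zero k hβ.ne'
  have key : ∑ k ∈ Finset.Icc 1 m, a k / β ^ k * Θ k = ∑ i, F i := by
    simp only [hΘ, Finset.mul_sum]
    rw [Finset.sum_comm]
    refine Finset.sum_congr rfl fun i _ => Finset.sum_congr rfl fun k hk => ?_
    rw [mul_pow]
    field_simp
  have hF0 : ∀ i, σ i = 0 → F i = 0 := by
    intro i hi
    simp only [hF, hi]
    refine Finset.sum_eq_zero fun k hk => ?_
    have hk1 : 1 ≤ k := (Finset.mem_Icc.mp hk).1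
    rw [zero_pow (by omega : k ≠ 0), mul_zero]
  set S : Finset (Fin N) := Finset.univ.filter (fun i => σ i ≠ 0) with hS
  have hcard : (cc : ℝ) = (N : ℝ) - S.card := by
    have h1 : cc = (Finset.univ.filter (fun i => σ i = 0)).card := by
      rw [hcc, Fintype.card_subtype]
    have h2 : (Finset.univ.filter (fun i => σ i = 0)).card + S.card = N := by
      rw [hS, Finset.card_filter_add_card_filter_not]
      simp
    have : (cc : ℝ) + S.card = N := by
      rw [h1]; exact_mod_cast h2
    linarith
  have hsum : ∑ i, F i = ∑ i ∈ S, F i := by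
    rw [hS]
    rw [← Finset.sum_filter_add_sum_filter_not Finset.univ (fun i => σ i ≠ 0) F]
    have : ∑ i ∈ Finset.univ.filter (fun i => ¬ σ i ≠ 0), F i = 0 := by
      refine Finset.sum_eq_zero fun i hi => ?_
      simp only [Finset.mem_filter, not_not] at hi
      exact hF0 i hi.2
    rw [this, add_zero]
  have hdiff : (cc : ℝ) - Ecc = ∑ i ∈ S, (F i - 1) := by
    rw [hE, key, hsum, Finset.sum_sub_distrib, Finset.sum_const, nsmul_eq_mul, mul_one, hcard]
    ring
  rw [hdiff]
  have hbound : ∀ i ∈ S, |F i - 1| ≤ γ ^ m := by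
    intro i hi
    simp only [hS, Finset.mem_filter] at hi
    have := hf (σ i) (hσ i hi.2)
    rwa [abs_sub_comm]
  calc |∑ i ∈ S, (F i - 1)| ≤ ∑ i ∈ S, |F i - 1| := Finset.abs_sum_le_sum_abs _ _
    _ ≤ ∑ _i ∈ S, γ ^ m := Finset.sum_le_sum hbound
    _ = S.card * γ ^ m := by rw [Finset.sum_const, nsmul_eq_mul]
    _ = ((N : ℝ) - cc) * γ ^ m := by rw [hcard]; ring_nf
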